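/- Lemma (marginal matching characterizes maximality of a deterministic invariant teacher): Let X be a finite set with equivalence relation ∼ having n∼ ≥ 2 equivalence classes, let p be a probability mass function on X with full support, and let q assign to each x ∈ X a probability mass function q(·|x) on {0,…,n∼−1} that is deterministic (for every x, some category has probability 1 under q(·|x)) and ∼-invariant (x ∼ x′ implies q(·|x) = q(·|x′)). Then q is maximal (i.e., x ≁ x⁻ implies q(·|x) ≠ q(·|x⁻)) if and only if there exists a maximal invariant M : X → {0,…,n∼−1} such that the marginal m ↦ Σ_{x∈X} p(x)·q(m|x) equals the pushforward of p by M (the distribution of M(X) when X ∼ p). -/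
import Mathlib


open scoped Classical
open Finset

namespace ISSL

/-- Number of equivalence classes of the equivalence relation `r` on `X`. -/
noncomputable def nequiv {X : Type*} (r : Setoid X) : ℕ := Nat.card (Quotient r)

noncomputable instance instFintypeQuot {X : Type*} [Fintype X] (r : Setoid X) :
    Fintype (Quotient r) := Fintype.ofFinite _

/-- `M` is a maximal invariant for `r`: `M x = M x'` iff `x ∼ x'`. -/
def IsMaximalInvariant {X : Type*} (r : Setoid X) {k : ℕ} (M : X → Fin k) : Prop :=
  ∀ x x', M x = M x' ↔ r x x'

/-- A map is `∼`-invariant if it is constant on equivalence classes. -/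
def IsInvariant {X : Type*} (r : Setoid X) {Z : Type*} (φ : X → Z) : Prop :=
  ∀ x x', r x x' → φ x = φ x'

/-- Argmax prediction `pred(v) = argmax_i v[i]` for a vector-output predictor. -/
noncomputable def predArg {k : ℕ} [NeZero k] (v : Fin k → ℝ) : Fin k :=
  Classical.choose ((Finset.univ : Finset (Fin k)).exists_max_image v
    ⟨⟨0, Nat.pos_of_ne_zero (NeZero.ne k)⟩, Finset.mem_univ _⟩)

/-- Binary prediction `1[v ≥ 0]` from a scalar logit. -/
noncomputable def predBin (v : Fin 1 → ℝ) : Fin 2 := if 0 ≤ v 0 then 1 else 0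

/-- A probing family on `ℝ^d`: for each output arity `k`, a set of maps `ℝ^d → ℝ^k`. -/
structure ProbingFamily (d : ℕ) where
  mem : (k : ℕ) → Set ((Fin d → ℝ) → (Fin k → ℝ))

/-- The linear probing family: all maps `z ↦ Wᵀ z`. -/
def linearFamily (d : ℕ) : ProbingFamily d :=
  ⟨fun k => {f | ∃ W : Matrix (Fin d) (Fin k) ℝ, ∀ z j, f z j = ∑ i, W i j * z i}⟩

/-- `Q` contains all linear predictors. -/
def ContainsLinear {d : ℕ} (Q : ProbingFamily d) : Prop :=
  ∀ k, (linearFamily d).mem k ⊆ Q.mem k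

/-- `Q` is closed under vector manipulation: concatenation of two members, coordinate
indexing of a member, and sums of two scalar-output members. -/
def ClosedUnderVectorManipulation {d : ℕ} (Q : ProbingFamily d) : Prop :=
  (∀ (k k' : ℕ) (f : (Fin d → ℝ) → Fin k → ℝ) (g : (Fin d → ℝ) → Fin k' → ℝ),
      f ∈ Q.mem k → g ∈ Q.mem k' → (fun z => Fin.append (f z) (g z)) ∈ Q.mem (k + k')) ∧
  (∀ (k : ℕ) (f : (Fin d → ℝ) → Fin k → ℝ), f ∈ Q.mem k →
      ∀ i : Fin k, (fun z (_ : Fin 1) => f z i) ∈ Q.mem 1) ∧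
  (∀ f g : (Fin d → ℝ) → Fin 1 → ℝ, f ∈ Q.mem 1 → g ∈ Q.mem 1 →
      (fun z j => f z j + g z j) ∈ Q.mem 1)

/-- The classification rules induced by the probing family at arity `k`: for `k = 2`
a scalar-output predictor with sign prediction, for `k ≥ 3` a `k`-output predictor with
argmax prediction. -/
noncomputable def rules {d : ℕ} (Q : ProbingFamily d) : (k : ℕ) → Set ((Fin d → ℝ) → Fin k)
  | 0 => ∅
  | 1 => ∅
  | 2 => {h | ∃ f ∈ Q.mem 1, ∀ z, h z = predBin (f z)}
  | (n + 3) => {h | ∃ f ∈ Q.mem (n + 3), ∀ z, h z = predArg (f z)}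

/-- A `k`-ary `∼`-invariant task: a joint distribution on `X × Fin k` such that for every
input the most likely label is unique and invariant under `∼`. -/
structure InvTask (X : Type*) [Fintype X] (r : Setoid X) (k : ℕ) where
  p : X → Fin k → ℝ
  nonneg : ∀ x y, 0 ≤ p x y
  sum_one : ∑ x : X, ∑ y : Fin k, p x y = 1
  label : X → Fin k
  label_argmax : ∀ x y, y ≠ label x → p x y < p x (label x)
  label_inv : ∀ x x', r x x' → label x = label x'

variable {X : Type*} [Fintype X] {r : Setoid X} {d k : ℕ}

/-- Population 0-1 risk of a classification rule `h` through encoder `φ` on task `t`. -/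
noncomputable def risk (t : InvTask X r k) (φ : X → Fin d → ℝ)
    (h : (Fin d → ℝ) → Fin k) : ℝ :=
  ∑ x : X, ∑ y : Fin k, t.p x y * (if y = h (φ x) then 0 else 1)

/-- Bayes error of task `t`. -/
noncomputable def bayes (t : InvTask X r k) : ℝ := 1 - ∑ x : X, t.p x (t.label x)

/-- `φ` is population optimal: the best probe realizes the Bayes error on every invariant task. -/
noncomputable def PopOptimal (r : Setoid X) (Q : ProbingFamily d)
    (φ : X → Fin d → ℝ) : Prop :=
  ∀ k : ℕ, 2 ≤ k → k ≤ nequiv r → ∀ t : InvTask X r k,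
    sInf ((fun h => risk t φ h) '' rules Q k) = bayes t

/-- Input marginal of task `t`. -/
noncomputable def marginal (t : InvTask X r k) (x : X) : ℝ := ∑ y : Fin k, t.p x y

/-- Empirical 0-1 risk of rule `h` on a dataset of inputs labeled by the most likely label. -/
noncomputable def empRisk (t : InvTask X r k) (φ : X → Fin d → ℝ)
    (h : (Fin d → ℝ) → Fin k) {n : ℕ} (D : Fin n → X) : ℝ :=
  (∑ i : Fin n, if t.label (D i) = h (φ (D i)) then (0 : ℝ) else 1) / n

/-- `h` is an empirical risk minimizer on dataset `D`. -/
noncomputable def IsERM (Q : ProbingFamily d) (t : InvTask X r k) (φ : X → Fin d → ℝ)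
    {n : ℕ} (D : Fin n → X) (h : (Fin d → ℝ) → Fin k) : Prop :=
  h ∈ rules Q k ∧ ∀ h' ∈ rules Q k, empRisk t φ h D ≤ empRisk t φ h' D

/-- Excess risk of ERMs: worst population risk of an ERM minus the Bayes error. -/
noncomputable def excessRisk (Q : ProbingFamily d) (t : InvTask X r k)
    (φ : X → Fin d → ℝ) {n : ℕ} (D : Fin n → X) : ℝ :=
  sSup ((fun h => risk t φ h) '' {h | IsERM Q t φ D h}) - bayes t

/-- Expected excess risk over datasets of `n` i.i.d. inputs labeled by the most likely label. -/
noncomputable def expExcess (Q : ProbingFamily d) (t : InvTask X r k)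
    (φ : X → Fin d → ℝ) (n : ℕ) : ℝ :=
  ∑ D : Fin n → X, (∏ i, marginal t (D i)) * excessRisk Q t φ D

/-- Worst-case (over invariant tasks) expected excess risk of ERMs. -/
noncomputable def worstExcess (r : Setoid X) (Q : ProbingFamily d)
    (φ : X → Fin d → ℝ) (n : ℕ) : ℝ :=
  sSup {e : ℝ | ∃ k : ℕ, 2 ≤ k ∧ k ≤ nequiv r ∧ ∃ t : InvTask X r k, e = expExcess Q t φ n}

/-- `φ` is sample optimal: population optimal and minimizing the worst-case expected
excess risk of ERMs among population-optimal encoders, for every sample size. -/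
noncomputable def SampleOptimal (r : Setoid X) (Q : ProbingFamily d)
    (φ : X → Fin d → ℝ) : Prop :=
  PopOptimal r Q φ ∧
    ∀ n : ℕ, 1 ≤ n → ∀ φ' : X → Fin d → ℝ, PopOptimal r Q φ' →
      worstExcess r Q φ n ≤ worstExcess r Q φ' n

/-- Probability of an equivalence class under the input marginal of `t`. -/
noncomputable def classProb (t : InvTask X r k) (c : Quotient r) : ℝ :=
  ∑ x : X, if Quotient.mk r x = c then marginal t x else 0

/-- Conditional probability of label `y` given the equivalence class `c` under `t`. -/
noncomputable def classCond (t : InvTask X r k) (c : Quotient r) (y : Fin k) : ℝ :=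
  (∑ x : X, if Quotient.mk r x = c then t.p x y else 0) / classProb t c

/-- `φ` is `(X,∼)`-shattered by `Q`: every invariant binary labeling is realized. -/
noncomputable def InvShattered (r : Setoid X) (Q : ProbingFamily d)
    (φ : X → Fin d → ℝ) : Prop :=
  ∀ c : X → Fin 2, IsInvariant r c → ∃ f ∈ Q.mem 1, ∀ x, c x = predBin (f (φ x))

/-- A set `Z ⊆ ℝ^d` is classically shattered by `Q`. -/
noncomputable def ClassicallyShattered {d : ℕ} (Q : ProbingFamily d)
    (Z : Set (Fin d → ℝ)) : Prop :=
  ∀ c : (Fin d → ℝ) → Fin 2, ∃ f ∈ Q.mem 1, ∀ z ∈ Z, c z = predBin (f z)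


/-- **Lemma** (marginal matching characterizes maximality of a deterministic invariant
teacher): a deterministic `∼`-invariant teacher over `n∼` categories is maximal iff its
marginal matches the pushforward of the input distribution by some maximal invariant. -/
theorem teacher_maximal_iff_marginal_matching {X : Type*} [Fintype X] (r : Setoid X)
    (hn : 2 ≤ nequiv r)
    (p : X → ℝ) (hpos : ∀ x, 0 < p x) (hsum : ∑ x : X, p x = 1)
    (q : X → Fin (nequiv r) → ℝ)
    (hq0 : ∀ x m, 0 ≤ q x m) (hq1 : ∀ x, ∑ m, q x m = 1)
    (hdet : ∀ x, ∃ m, q x m = 1)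
    (hinv : ∀ x x', r x x' → q x = q x') :
    (∀ x x', ¬r x x' → q x ≠ q x') ↔
      ∃ M : X → Fin (nequiv r), IsMaximalInvariant r M ∧
        ∀ m : Fin (nequiv r),
          (∑ x : X, p x * q x m) = ∑ x : X, if M x = m then p x else 0 := by
  classical
  -- the deterministic label
  set L : X → Fin (nequiv r) := fun x => Classical.choose (hdet x) with hL
  have hL1 : ∀ x, q x (L x) = 1 := fun x => Classical.choose_spec (hdet x)
  have hqind : ∀ x m, q x m = if m = L x then 1 else 0 := by
    intro x m
    by_cases hm : m = L x
    · simp [hm, hL1 x]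
    · have hz : ∑ n ∈ (Finset.univ.erase (L x)), q x n = 0 := by
        have := hq1 x
        have h := Finset.add_sum_erase Finset.univ (q x) (Finset.mem_univ (L x))
        rw [← h, hL1 x] at this
        linarith
      have := (Finset.sum_eq_zero_iff_of_nonneg (fun n _ => hq0 x n)).1 hz m
        (Finset.mem_erase.2 ⟨hm, Finset.mem_univ m⟩)
      simp [hm, this]
  have hq_eq_iff : ∀ x x', q x = q x' ↔ L x = L x' := by
    intro x x'
    constructor
    · intro h
      have := hL1 x
      rw [h, hqind x' (L x)] at this
      by_contra hne
      simp [hne] at this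
    · intro h
      funext m
      rw [hqind, hqind, h]
  have hmarg : ∀ m, (∑ x : X, p x * q x m) = ∑ x : X, if L x = m then p x else 0 := by
    intro m
    apply Finset.sum_congr rfl
    intro x _
    rw [hqind]
    by_cases h : L x = m
    · simp [h]
    · simp [h, Ne.symm h]
  have hcard : Fintype.card (Quotient r) = nequiv r := by
    rw [nequiv, Nat.card_eq_fintype_card]
  constructor
  · intro hmax
    refine ⟨L, ?_, hmarg⟩
    intro x x'
    constructor
    · intro h
      by_contra hr
      exact hmax x x' hr ((hq_eq_iff x x').2 h)
    · intro hr
      exact (hq_eq_iff x x').1 (hinv x x' hr)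
  · rintro ⟨M, hM, hmatch⟩ x0 x1 hnr hq
    -- L is invariant, and L x0 = L x1 with x0 ≁ x1, so L-bar is not injective
    have hLinv : ∀ x x', r x x' → L x = L x' := fun x x' hr =>
      (hq_eq_iff x x').1 (hinv x x' hr)
    set Lbar : Quotient r → Fin (nequiv r) := Quotient.lift L hLinv with hLbar
    have hLbar_noninj : ¬ Function.Injective Lbar := by
      intro hinj
      exact hnr (Quotient.exact (hinj (a₁ := Quotient.mk r x0) (a₂ := Quotient.mk r x1)
        ((hq_eq_iff x0 x1).1 hq)))
    -- so L-bar is not surjective; pick m0 not in the range of L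
    have hLbar_nonsurj : ¬ Function.Surjective Lbar := by
      intro hsurj
      exact hLbar_noninj (by
        have : Function.Bijective Lbar :=
          (Fintype.bijective_iff_surjective_and_card Lbar).2 ⟨hsurj, by simp [hcard]⟩
        exact this.injective)
    obtain ⟨m0, hm0⟩ := not_forall.1 hLbar_nonsurj
    have hm0' : ∀ x : X, L x ≠ m0 := by
      intro x hx
      exact hm0 ⟨Quotient.mk r x, hx⟩
    -- LHS at m0 is zero
    have hlhs : (∑ x : X, p x * q x m0) = 0 := by
      rw [hmarg]
      apply Finset.sum_eq_zero
      intro x _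
      simp [hm0' x]
    -- RHS at m0 is positive since M is surjective
    have hMsurj : Function.Surjective M := by
      have : Function.Injective (Quotient.lift M (fun a b h => (hM a b).2 h)) := by
        intro a b
        induction a using Quotient.ind
        induction b using Quotient.ind
        intro h
        exact Quotient.sound ((hM _ _).1 h)
      have hb : Function.Bijective (Quotient.lift M (fun a b h => (hM a b).2 h)) :=
        (Fintype.bijective_iff_injective_and_card _).2 ⟨this, by simp [hcard]⟩
      intro m
      obtain ⟨c, hc⟩ := hb.surjective m
      induction c using Quotient.ind
      exact ⟨_, hc⟩
    obtain ⟨x2, hx2⟩ := hMsurj m0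
    have hrhs : (0 : ℝ) < ∑ x : X, if M x = m0 then p x else 0 := by
      apply Finset.sum_pos'
      · intro x _
        split <;> [exact (hpos x).le; rfl]
      · exact ⟨x2, Finset.mem_univ x2, by simp [hx2, hpos x2]⟩
    rw [← hmatch m0, hlhs] at hrhs
    exact lt_irrefl _ hrhs

end ISSL
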